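/- Let m ≥ 2 and n ≥ 1, and work in the (m+n)×(m+n) complex matrices. Set x = E 1 (m+1), y = E 1 2, z = E 2 1. If λ ∈ ℂ satisfies ⁅λ • x, ⁅y, z⁆⁆ + ⁅y, ⁅z, x⁆⁆ + ⁅z, ⁅x, y⁆⁆ = 0, then λ = 1. (This is the graded Hom-Jacobi identity for the automorphism ȷ(λ) of sl(m|n) evaluated at the odd element x and the even elements y, z, and it forces ȷ(λ) = id.) -/

import Mathlib

open Matrix

/-- The Hom-Jacobi identity for `ȷ(λ)` on `sl(m|n)` at `x = E 1 (m+1)`, `y = E 1 2`,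
`z = E 2 1` (1-based indexing) forces `λ = 1`. -/
theorem jmap_homJacobi_sl_forces_lambda_eq_one (m n : ℕ) (hm : 2 ≤ m) (hn : 1 ≤ n) (l : ℂ)
    (x y z : Matrix (Fin (m + n)) (Fin (m + n)) ℂ)
    (hx : x = Matrix.single ⟨0, by omega⟩ ⟨m, by omega⟩ (1 : ℂ))
    (hy : y = Matrix.single ⟨0, by omega⟩ ⟨1, by omega⟩ (1 : ℂ))
    (hz : z = Matrix.single ⟨1, by omega⟩ ⟨0, by omega⟩ (1 : ℂ))
    (h : ⁅l • x, ⁅y, z⁆⁆ + ⁅y, ⁅z, x⁆⁆ + ⁅z, ⁅x, y⁆⁆ = 0) :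
    l = 1 := by
  subst hx hy hz
  have hm0 : (⟨m, by omega⟩ : Fin (m+n)) ≠ ⟨0, by omega⟩ := by simp [Fin.ext_iff]; omega
  have hm1 : (⟨m, by omega⟩ : Fin (m+n)) ≠ ⟨1, by omega⟩ := by simp [Fin.ext_iff]; omega
  have h10 : (⟨1, by omega⟩ : Fin (m+n)) ≠ ⟨0, by omega⟩ := by simp [Fin.ext_iff]
  simp only [Ring.lie_def, smul_mul_assoc, mul_smul_comm, Matrix.mul_sub, Matrix.sub_mul,
    Matrix.single_mul_single_same, Matrix.single_mul_single_of_ne (h := hm0),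
    Matrix.single_mul_single_of_ne (h := hm1), Matrix.single_mul_single_of_ne (h := h10),
    mul_one, one_mul, sub_zero, zero_sub, smul_zero, smul_neg, Matrix.mul_zero,
    Matrix.zero_mul] at h
  have H := congrFun (congrFun h ⟨0, by omega⟩) ⟨m, by omega⟩
  simp [Matrix.single_apply_same, hm0, hm1, h10] at H
  linear_combination -H
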